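/- Let Z = [[1,0],[0,−1]], X = [[0,1],[1,0]], Y = [[0,−i],[i,0]] be the Pauli matrices, and define Ry(φ) = exp(−i(φ/2)Y) and the single-qubit observable M(φ) = Ry(φ)† Z Ry(φ). Let ψ = (|00⟩ − |11⟩)/√2 ∈ ℂ⁴ be the Bell state Φ⁻, and define the two-qubit operators A_q = M(φ^A_q) ⊗ I and B_q = I ⊗ M(φ^B_q) with angles φ^A₀ = 0, φ^A₁ = −π/2, φ^B₀ = π/4, φ^B₁ = −π/4. Then ⟨ψ, (A₀B₀ + A₁B₀ + A₀B₁ − A₁B₁) ψ⟩ = 2√2, i.e., this measurement strategy on the Bell state achieves the optimal quantum CHSH value. -/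

import Mathlib

open Matrix Kronecker

/-- Pauli `Z` matrix. -/
def PauliZ : Matrix (Fin 2) (Fin 2) ℂ := !![1, 0; 0, -1]

/-- Pauli `X` matrix. -/
def PauliX : Matrix (Fin 2) (Fin 2) ℂ := !![0, 1; 1, 0]

/-- Pauli `Y` matrix. -/
def PauliY : Matrix (Fin 2) (Fin 2) ℂ := !![0, -Complex.I; Complex.I, 0]

/-- Rotation `Ry(φ) = exp(−i(φ/2) Y)`. -/
noncomputable def Ry (φ : ℝ) : Matrix (Fin 2) (Fin 2) ℂ :=
  NormedSpace.exp ((-(Complex.I * ((φ : ℂ) / 2))) • PauliY)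

/-- Rotated single-qubit observable `M(φ) = Ry(φ)† Z Ry(φ)`. -/
noncomputable def Mobs (φ : ℝ) : Matrix (Fin 2) (Fin 2) ℂ :=
  (Ry φ)ᴴ * PauliZ * Ry φ

/-- The Bell state `Φ⁻ = (|00⟩ − |11⟩)/√2` in `ℂ⁴ ≅ ℂ² ⊗ ℂ²`. -/
noncomputable def bellPhiMinus : Fin 2 × Fin 2 → ℂ :=
  ((Real.sqrt 2 : ℝ)⁻¹ : ℂ) •
    ((Pi.single ((0 : Fin 2), (0 : Fin 2)) 1 : Fin 2 × Fin 2 → ℂ) -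
      (Pi.single ((1 : Fin 2), (1 : Fin 2)) 1 : Fin 2 × Fin 2 → ℂ))

/-- Alice's observable `A_q = M(φ^A_q) ⊗ I`. -/
noncomputable def Aobs (φ : ℝ) : Matrix (Fin 2 × Fin 2) (Fin 2 × Fin 2) ℂ :=
  Mobs φ ⊗ₖ (1 : Matrix (Fin 2) (Fin 2) ℂ)

/-- Bob's observable `B_q = I ⊗ M(φ^B_q)`. -/
noncomputable def Bobs (φ : ℝ) : Matrix (Fin 2 × Fin 2) (Fin 2 × Fin 2) ℂ :=
  (1 : Matrix (Fin 2) (Fin 2) ℂ) ⊗ₖ Mobs φ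

/-- Measuring the Bell state `Φ⁻` with the rotated observables given by angles
`φ^A₀ = 0`, `φ^A₁ = −π/2`, `φ^B₀ = π/4`, `φ^B₁ = −π/4` achieves the optimal quantum CHSH
value `2√2`. -/
noncomputable def U2 : Matrix (Fin 2) (Fin 2) ℂ := !![1, 1; Complex.I, -Complex.I]

lemma U2_inv : U2⁻¹ = !![1/2, -Complex.I/2; 1/2, Complex.I/2] := by
  apply Matrix.inv_eq_right_inv
  ext i j
  fin_cases i <;> fin_cases j <;>
    simp [U2, Matrix.mul_apply, Fin.sum_univ_succ] <;> ring_nf <;>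
    simp [Complex.I_sq]

lemma U2_unit : IsUnit U2 := by
  rw [Matrix.isUnit_iff_isUnit_det]
  simp [U2, Matrix.det_fin_two_of]
  intro h
  have := congrArg Complex.im h
  norm_num at this

lemma Ry_eq (φ : ℝ) :
    NormedSpace.exp ((-(Complex.I * ((φ : ℂ) / 2))) • PauliY) =
      !![(Real.cos (φ/2) : ℂ), -(Real.sin (φ/2) : ℂ);
         (Real.sin (φ/2) : ℂ), (Real.cos (φ/2) : ℂ)] := by
  set c : ℂ := -(Complex.I * ((φ : ℂ) / 2)) with hc
  have hconj : c • PauliY = U2 * Matrix.diagonal ![c, -c] * U2⁻¹ := by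
    rw [U2_inv]
    ext i j
    fin_cases i <;> fin_cases j <;>
      simp [U2, PauliY, Matrix.mul_apply, Fin.sum_univ_succ, Matrix.diagonal_apply,
        Matrix.vecMul, dotProduct] <;> ring_nf <;>
      simp [Complex.I_sq] <;> ring_nf
  have hD : NormedSpace.exp (Matrix.diagonal ![c, -c]) =
      Matrix.diagonal ![Complex.exp c, Complex.exp (-c)] := by
    rw [Matrix.exp_diagonal, Pi.exp_def]
    have h2 : (fun i => NormedSpace.exp (![c, -c] i)) =
        ![Complex.exp c, Complex.exp (-c)] := by
      funext i
      fin_cases i <;> simp [Complex.exp_eq_exp_ℂ]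
    rw [h2]
  have hexp : Complex.exp c = Real.cos (φ/2) - Complex.I * Real.sin (φ/2) := by
    rw [hc, show -(Complex.I * ((φ:ℂ)/2)) = ((-(φ/2) : ℝ) : ℂ) * Complex.I by push_cast; ring,
      Complex.exp_mul_I]
    push_cast
    simp [Real.cos_neg, Real.sin_neg]
    ring
  have hexp' : Complex.exp (-c) = Real.cos (φ/2) + Complex.I * Real.sin (φ/2) := by
    rw [hc, show -(-(Complex.I * ((φ:ℂ)/2))) = (((φ/2) : ℝ) : ℂ) * Complex.I by push_cast; ring,
      Complex.exp_mul_I]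
    push_cast
    ring
  rw [hconj, Matrix.exp_conj U2 (Matrix.diagonal ![c, -c]) U2_unit, hD, U2_inv,
    hexp, hexp']
  ext i j
  fin_cases i <;> fin_cases j <;>
    simp [U2, Matrix.mul_apply, Fin.sum_univ_succ, Matrix.diagonal_apply,
      Matrix.vecMul, dotProduct] <;> ring_nf <;> simp [Complex.I_sq] <;> ring_nf

lemma Mobs_eq (φ : ℝ) :
    Mobs φ = !![(Real.cos φ : ℂ), -(Real.sin φ : ℂ);
                -(Real.sin φ : ℂ), -(Real.cos φ : ℂ)] := by
  have hcosr : Real.cos φ = Real.cos (φ/2)^2 - Real.sin (φ/2)^2 := by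
    have h1 := Real.cos_two_mul (φ/2)
    have h2 := Real.sin_sq_add_cos_sq (φ/2)
    rw [show 2*(φ/2) = φ by ring] at h1
    nlinarith
  have hcos : (Real.cos φ : ℂ) = (Real.cos (φ/2) : ℂ)^2 - (Real.sin (φ/2) : ℂ)^2 := by
    push_cast [hcosr]; ring
  have hsin : (Real.sin φ : ℂ) = 2 * (Real.sin (φ/2) : ℂ) * (Real.cos (φ/2) : ℂ) := by
    have := Real.sin_two_mul (φ/2)
    rw [show 2*(φ/2) = φ by ring] at this
    push_cast [this]
    ring
  unfold Mobs Ry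
  rw [Ry_eq]
  ext i j
  fin_cases i <;> fin_cases j <;>
    simp [PauliZ, Matrix.mul_apply, Fin.sum_univ_succ, Matrix.conjTranspose_apply,
      hcos, hsin, ← Complex.ofReal_cos, ← Complex.ofReal_sin, Complex.conj_ofReal,
      ← Complex.ofReal_mul, ← Complex.ofReal_pow] <;> push_cast <;> ring

lemma AB_form (a b : ℝ) (M N : Matrix (Fin 2) (Fin 2) ℂ) (hM : Mobs a = M) (hN : Mobs b = N) :
    star bellPhiMinus ⬝ᵥ ((Aobs a * Bobs b) *ᵥ bellPhiMinus) =
      (M 0 0 * N 0 0 - M 0 1 * N 0 1 - M 1 0 * N 1 0 + M 1 1 * N 1 1) / 2 := by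
  have hk : Aobs a * Bobs b = M ⊗ₖ N := by
    rw [Aobs, Bobs, ← Matrix.mul_kronecker_mul, mul_one, one_mul, hM, hN]
  rw [hk]
  have h2 : ((Real.sqrt 2 : ℝ) : ℂ)⁻¹ * ((Real.sqrt 2 : ℝ) : ℂ)⁻¹ = 1/2 := by
    rw [← mul_inv]
    norm_cast
    rw [Real.mul_self_sqrt (by norm_num)]
    norm_num
  simp only [bellPhiMinus, dotProduct, Matrix.mulVec, Fintype.sum_prod_type,
    Fin.sum_univ_succ, Fin.sum_univ_zero, Pi.smul_apply, Pi.sub_apply, Pi.single_apply,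
    star_sub, star_smul, Pi.star_apply, Matrix.kroneckerMap_apply]
  simp [Prod.ext_iff]
  linear_combination (M 0 0 * N 0 0 - M 0 1 * N 0 1 - M 1 0 * N 1 0 + M 1 1 * N 1 1) * h2

theorem chsh_optimal_strategy_value :
    star bellPhiMinus ⬝ᵥ
        ((Aobs 0 * Bobs (Real.pi / 4) + Aobs (-(Real.pi / 2)) * Bobs (Real.pi / 4) +
            Aobs 0 * Bobs (-(Real.pi / 4)) -
            Aobs (-(Real.pi / 2)) * Bobs (-(Real.pi / 4))) *ᵥ bellPhiMinus) =
      ((2 * Real.sqrt 2 : ℝ) : ℂ) := by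
  rw [Matrix.sub_mulVec, Matrix.add_mulVec, Matrix.add_mulVec, dotProduct_sub,
    dotProduct_add, dotProduct_add,
    AB_form 0 (Real.pi/4) _ _ (Mobs_eq 0) (Mobs_eq _),
    AB_form (-(Real.pi/2)) (Real.pi/4) _ _ (Mobs_eq _) (Mobs_eq _),
    AB_form 0 (-(Real.pi/4)) _ _ (Mobs_eq 0) (Mobs_eq _),
    AB_form (-(Real.pi/2)) (-(Real.pi/4)) _ _ (Mobs_eq _) (Mobs_eq _)]
  simp [Real.cos_pi_div_four, Real.sin_pi_div_four, Real.cos_pi_div_two, Real.sin_pi_div_two]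
  push_cast
  ring
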